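/- Let p ≥ 1 be an integer, H > 0, β ∈ [0, 1/p], x̄ ∈ E, T ∈ s, and let g be a subgradient of ψ at T such that ‖∇f(T) + H‖T − x̄‖^{p−1}(T − x̄) + g‖ ≤ β‖∇f(T) + g‖. Then ⟨∇f(T) + g, x̄ − T⟩ ≥ ((1−β)/H)^{1/p}·‖∇f(T) + g‖^{(p+1)/p}. -/

import Mathlib

open scoped RealInnerProductSpace

set_option maxHeartbeats 1000000 in
theorem stmt2 {E : Type*} [NormedAddCommGroup E] [InnerProductSpace ℝ E]
    [FiniteDimensional ℝ E]
    (s : Set E) (hs : s.Nonempty) (hsconv : Convex ℝ s)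
    (ψ : E → ℝ) (hψ : ConvexOn ℝ s ψ)
    (f : E → ℝ) (f' : E → E) (hf' : ∀ x, HasGradientAt f (f' x) x)
    (hfconv : ConvexOn ℝ Set.univ f)
    (p : ℕ) (hp : 1 ≤ p) (H : ℝ) (hH : 0 < H)
    (β : ℝ) (hβ0 : 0 ≤ β) (hβ1 : β ≤ 1 / (p : ℝ))
    (xbar T : E) (hT : T ∈ s) (g : E)
    (hg : ∀ z ∈ s, ψ z ≥ ψ T + ⟪g, z - T⟫)
    (hineq : ‖f' T + (H * ‖T - xbar‖ ^ (p - 1)) • (T - xbar) + g‖ ≤ β * ‖f' T + g‖) :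
    ⟪f' T + g, xbar - T⟫ ≥
      ((1 - β) / H) ^ (1 / (p : ℝ)) * ‖f' T + g‖ ^ (((p : ℝ) + 1) / p) := by
  have hP1 : (1:ℝ) ≤ (p:ℝ) := by exact_mod_cast hp
  have hP0 : (0:ℝ) < (p:ℝ) := by linarith
  have hβle1 : β ≤ 1 := hβ1.trans (by rw [div_le_one hP0]; exact hP1)
  have h1β : (0:ℝ) ≤ 1 - β := by linarith
  set P := (p:ℝ) with hPdef
  set r := T - xbar with hr
  set t := ‖r‖ with htdef
  set c := H * t ^ (p - 1) with hcdef
  set v := f' T + g with hvdef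
  set u := f' T + c • r + g with hudef
  set V := ‖v‖ with hVdef
  have hVnn : (0:ℝ) ≤ V := norm_nonneg _
  rcases eq_or_lt_of_le hVnn with hV0 | hV0
  · -- V = 0 case
    have hv0 : v = 0 := by
      have : ‖v‖ = 0 := hV0.symm
      rwa [norm_eq_zero] at this
    have hne : ((P + 1) / P) ≠ 0 := by positivity
    rw [hv0, ← hV0, Real.zero_rpow hne, mul_zero]
    simp
  · rcases eq_or_lt_of_le (norm_nonneg r) with ht0 | ht0
    · -- t = 0 case
      have hr0 : r = 0 := by
        have : ‖r‖ = 0 := ht0.symm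
        rwa [norm_eq_zero] at this
      have huv : u = v := by simp [hudef, hvdef, hr0]
      rw [huv] at hineq
      have hβ1' : (1:ℝ) ≤ β := by nlinarith
      have hβeq : β = 1 := le_antisymm hβle1 hβ1'
      have hxT : xbar - T = 0 := by rw [← neg_sub T xbar, ← hr, hr0, neg_zero]
      have hne : (1 / P) ≠ 0 := by positivity
      rw [hxT, inner_zero_right, hβeq]
      rw [show ((1:ℝ) - 1) / H = 0 by ring, Real.zero_rpow hne, zero_mul]
    · -- main case : t > 0, V > 0
      have htnn : (0:ℝ) ≤ t := le_of_lt ht0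
      have hc0 : (0:ℝ) < c := by positivity
      set b := H * t ^ p with hbdef
      have hb0 : (0:ℝ) < b := by positivity
      have hbct : c * t = b := by
        rw [hcdef, hbdef, mul_assoc, ← pow_succ, Nat.sub_add_cancel hp]
      have hvu : v - u = (-c) • r := by
        rw [hvdef, hudef, neg_smul]; abel
      have hnormvu : ‖v - u‖ = b := by
        rw [hvu, norm_smul, Real.norm_eq_abs, abs_neg, abs_of_pos hc0, ← htdef, hbct]
      have hbge : (1 - β) * V ≤ b := by
        have h1 : ‖v‖ - ‖u‖ ≤ ‖v - u‖ := norm_sub_norm_le v u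
        rw [hnormvu] at h1
        have h2 : ‖u‖ ≤ β * V := hineq
        rw [← hVdef] at h1
        nlinarith
      set a := ⟪v, v - u⟫ with hadef
      have hu2 : ‖u‖ ^ 2 = V ^ 2 - 2 * a + b ^ 2 := by
        have h1 : v - (v - u) = u := by abel
        have h2 := norm_sub_sq_real v (v - u)
        rw [h1, hnormvu, ← hVdef, ← hadef] at h2
        exact h2
      have ha : b ^ 2 + (1 - β ^ 2) * V ^ 2 ≤ 2 * a := by
        have h2 : ‖u‖ ≤ β * V := hineq
        have h3 : ‖u‖ ^ 2 ≤ (β * V) ^ 2 := by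
          have := norm_nonneg u; nlinarith
        nlinarith
      -- key real inequality
      have hPβ : P * β ≤ 1 := by
        have := (le_div_iff₀ hP0).mp hβ1; linarith
      have hgm : b ^ ((P - 1) / P) * ((1 - β) * V) ^ (1 / P) ≤
          ((P - 1) / P) * b + (1 / P) * ((1 - β) * V) :=
        Real.geom_mean_le_arith_mean2_weighted (div_nonneg (by linarith) hP0.le)
          (by positivity) hb0.le (mul_nonneg h1β hVnn)
          (by rw [← add_div, sub_add_cancel]; exact div_self hP0.ne')
      have key : 2 * (b ^ ((P - 1) / P) * ((1 - β) * V) ^ (1 / P) * V) ≤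
          b ^ 2 + (1 - β ^ 2) * V ^ 2 := by
        have hgm2 : P * (b ^ ((P - 1) / P) * ((1 - β) * V) ^ (1 / P)) ≤
            (P - 1) * b + (1 - β) * V := by
          have h := mul_le_mul_of_nonneg_left hgm hP0.le
          have heq : P * (((P - 1) / P) * b + (1 / P) * ((1 - β) * V)) =
              (P - 1) * b + (1 - β) * V := by field_simp
          linarith [heq ▸ h]
        have hfac : 0 ≤ (b - (1 - β) * V) * (P * b + P * (1 - β) * V - 2 * (P - 1) * V) := by
          apply mul_nonneg (by linarith)
          nlinarith
        have hmul : P * (2 * (b ^ ((P - 1) / P) * ((1 - β) * V) ^ (1 / P) * V)) ≤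
            P * (b ^ 2 + (1 - β ^ 2) * V ^ 2) := by
          have h4 : 2 * V * (P * (b ^ ((P - 1) / P) * ((1 - β) * V) ^ (1 / P))) ≤
              2 * V * ((P - 1) * b + (1 - β) * V) :=
            mul_le_mul_of_nonneg_left hgm2 (by positivity)
          nlinarith
        nlinarith
      have hain : a ≥ b ^ ((P - 1) / P) * ((1 - β) * V) ^ (1 / P) * V := by linarith
      -- rewrite LHS inner product
      have hxT : xbar - T = c⁻¹ • (v - u) := by
        rw [hvu, smul_smul, ← neg_sub T xbar, ← hr]
        rw [show c⁻¹ * (-c) = -1 by field_simp]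
        simp
      have hInner : ⟪v, xbar - T⟫ = c⁻¹ * a := by
        rw [hxT, real_inner_smul_right]
      -- identity : c * RHS = b ^ ((P-1)/P) * ((1-β)V)^(1/P) * V
      have hHp : (0:ℝ) < H ^ (1 / P) := Real.rpow_pos_of_pos hH _
      have e1 : ((1 - β) / H) ^ (1 / P) = (1 - β) ^ (1 / P) * (H ^ (1 / P))⁻¹ := by
        rw [Real.div_rpow h1β hH.le, div_eq_mul_inv]
      have e2 : ((1 - β) * V) ^ (1 / P) = (1 - β) ^ (1 / P) * V ^ (1 / P) :=
        Real.mul_rpow h1β hVnn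
      have e3 : V ^ ((P + 1) / P) = V ^ (1 / P) * V := by
        rw [show (P + 1) / P = 1 / P + 1 by field_simp; ring, Real.rpow_add hV0, Real.rpow_one]
      have e4 : b ^ ((P - 1) / P) = H ^ ((P - 1) / P) * t ^ (p - 1) := by
        rw [hbdef, Real.mul_rpow hH.le (by positivity)]
        congr 1
        rw [← Real.rpow_natCast t p, ← Real.rpow_mul htnn, ← Real.rpow_natCast t (p - 1)]
        congr 1
        rw [Nat.cast_sub hp]
        push_cast
        field_simp
        rw [hPdef]
      have e5 : H ^ ((P - 1) / P) * H ^ (1 / P) = H := by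
        rw [← Real.rpow_add hH, show (P - 1) / P + 1 / P = 1 by field_simp; ring, Real.rpow_one]
      have e6 : H * (H ^ (1 / P))⁻¹ = H ^ ((P - 1) / P) := by
        field_simp
        linarith [e5]
      have hid : c * (((1 - β) / H) ^ (1 / P) * V ^ ((P + 1) / P)) =
          b ^ ((P - 1) / P) * ((1 - β) * V) ^ (1 / P) * V := by
        calc c * (((1 - β) / H) ^ (1 / P) * V ^ ((P + 1) / P))
            = (H * (H ^ (1 / P))⁻¹) * t ^ (p - 1) * (1 - β) ^ (1 / P) * (V ^ (1 / P) * V) := by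
              rw [e1, e3, hcdef]; ring
          _ = H ^ ((P - 1) / P) * t ^ (p - 1) * (1 - β) ^ (1 / P) * (V ^ (1 / P) * V) := by
              rw [e6]
          _ = b ^ ((P - 1) / P) * ((1 - β) * V) ^ (1 / P) * V := by
              rw [e4, e2]; ring
      rw [ge_iff_le, hInner, inv_mul_eq_div, le_div_iff₀ hc0]
      calc ((1 - β) / H) ^ (1 / P) * V ^ ((P + 1) / P) * c
          = c * (((1 - β) / H) ^ (1 / P) * V ^ ((P + 1) / P)) := by ring
        _ = b ^ ((P - 1) / P) * ((1 - β) * V) ^ (1 / P) * V := hid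
        _ ≤ a := hain
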